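/- For all integers n ≥ 2, the Lucas numbers satisfy L_{2n+2} = Σ_{j=0}^{⌊n/2⌋} C(n−j, j) · (−1)^j · 3^{n+1−2j} − 2 · Σ_{j=0}^{⌊(n−1)/2⌋} C(n−j−1, j) · (−1)^j · 3^{n−1−2j}, where C(m,k) denotes the binomial coefficient. -/

import Mathlib

open Finset

private def fL (n j : ℕ) : ℤ := ((n - j).choose j : ℤ) * (-1) ^ j * 3 ^ (n - 2 * j)

private def SL (n : ℕ) : ℤ := ∑ j ∈ range (n + 1), fL n j

private lemma fL_zero {n j : ℕ} (h : n < 2 * j) : fL n j = 0 := by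
  have h' : n - j < j := by omega
  simp [fL, Nat.choose_eq_zero_of_lt h']

private lemma SL_eq (n : ℕ) : SL n = ∑ j ∈ range (n / 2 + 1), fL n j := by
  rw [SL]
  refine (Finset.sum_subset (Finset.range_subset_range.mpr (by omega : n / 2 + 1 ≤ n + 1)) ?_).symm
  intro j hj hj'
  simp only [mem_range] at hj hj'
  exact fL_zero (by omega)

private lemma term1 (n k : ℕ) :
    fL (n + 2) (k + 1) =
      -(((n - k).choose (k + 1) : ℤ) * (-1) ^ k * 3 ^ (n - 2 * k)) - fL n k := by
  have e1 : n + 2 - 2 * (k + 1) = n - 2 * k := by omega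
  have e2 : (n + 2 - (k + 1)).choose (k + 1) = (n - k).choose (k + 1) + (n - k).choose k := by
    by_cases hk : k ≤ n
    · have h1 : n + 2 - (k + 1) = (n - k) + 1 := by omega
      rw [h1, Nat.choose_succ_succ, Nat.add_comm]
    · have h1 : n + 2 - (k + 1) = 0 := by omega
      have h2 : n - k = 0 := by omega
      rw [h1, h2, Nat.choose_eq_zero_of_lt (by omega : 0 < k + 1),
        Nat.choose_eq_zero_of_lt (by omega : 0 < k)]
  rw [fL, fL, e1, e2]
  push_cast
  ring

private lemma term2 (n k : ℕ) :
    3 * fL (n + 1) (k + 1) = -(((n - k).choose (k + 1) : ℤ) * (-1) ^ k * 3 ^ (n - 2 * k)) := by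
  have e0 : n + 1 - (k + 1) = n - k := by omega
  by_cases hk : 2 * k + 1 ≤ n
  · have e1 : n - 2 * k = (n + 1 - 2 * (k + 1)) + 1 := by omega
    rw [fL, e0, e1]
    ring
  · have h0 : (n - k).choose (k + 1) = 0 := Nat.choose_eq_zero_of_lt (by omega)
    rw [fL, e0, h0]
    push_cast
    ring

private lemma SL_rec (n : ℕ) : SL (n + 2) = 3 * SL (n + 1) - SL n := by
  have h1 : SL (n + 2) = ∑ k ∈ range (n + 2), fL (n + 2) (k + 1) + fL (n + 2) 0 := by
    rw [SL, Finset.sum_range_succ']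
  have h2 : ∑ k ∈ range (n + 2), fL (n + 2) (k + 1) =
      ∑ k ∈ range (n + 2), (-(((n - k).choose (k + 1) : ℤ) * (-1) ^ k * 3 ^ (n - 2 * k))
        - fL n k) := Finset.sum_congr rfl (fun k _ => term1 n k)
  have h3 : 3 * SL (n + 1) =
      ∑ k ∈ range (n + 1), (-(((n - k).choose (k + 1) : ℤ) * (-1) ^ k * 3 ^ (n - 2 * k)))
        + 3 ^ (n + 2) := by
    rw [SL, Finset.mul_sum, Finset.sum_range_succ']
    congr 1
    · exact Finset.sum_congr rfl (fun k _ => term2 n k)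
    · simp [fL]
      ring
  have h4 : ∑ k ∈ range (n + 2), (-(((n - k).choose (k + 1) : ℤ) * (-1) ^ k * 3 ^ (n - 2 * k)))
      = ∑ k ∈ range (n + 1), (-(((n - k).choose (k + 1) : ℤ) * (-1) ^ k * 3 ^ (n - 2 * k))) := by
    rw [Finset.sum_range_succ]
    have : (n - (n + 1)).choose (n + 2) = 0 := Nat.choose_eq_zero_of_lt (by omega)
    simp [this]
  have h5 : ∑ k ∈ range (n + 2), fL n k = SL n := by
    rw [Finset.sum_range_succ, SL, fL_zero (by omega : n < 2 * (n + 1)), add_zero]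
  have h6 : fL (n + 2) 0 = 3 ^ (n + 2) := by simp [fL]
  rw [h1, h2, Finset.sum_sub_distrib, h4, h5, h6]
  linarith [h3]

private lemma key (L : ℕ → ℤ) (hL0 : L 0 = 2) (hL1 : L 1 = 1)
    (hL : ∀ n : ℕ, L (n + 2) = L (n + 1) + L n) :
    ∀ m : ℕ, L (2 * m + 4) = 3 * SL (m + 1) - 2 * SL m := by
  have hS0 : SL 0 = 1 := by norm_num [SL, fL]
  have hS1 : SL 1 = 3 := by norm_num [SL, fL, Finset.sum_range_succ]
  have hS2 : SL 2 = 8 := by norm_num [SL, fL, Finset.sum_range_succ]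
  have h2 : L 2 = 3 := by rw [show (2:ℕ) = 0 + 2 from rfl, hL 0, hL0, hL1]; norm_num
  have h3 : L 3 = 4 := by rw [show (3:ℕ) = 1 + 2 from rfl, hL 1, h2, hL1]; norm_num
  have h4 : L 4 = 7 := by rw [show (4:ℕ) = 2 + 2 from rfl, hL 2, h2, h3]; norm_num
  have h5 : L 5 = 11 := by rw [show (5:ℕ) = 3 + 2 from rfl, hL 3, h3, h4]; norm_num
  have h6 : L 6 = 18 := by rw [show (6:ℕ) = 4 + 2 from rfl, hL 4, h4, h5]; norm_num
  have main : ∀ m : ℕ, (L (2 * m + 4) = 3 * SL (m + 1) - 2 * SL m) ∧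
      (L (2 * m + 6) = 3 * SL (m + 2) - 2 * SL (m + 1)) := by
    intro m
    induction m with
    | zero =>
      constructor
      · norm_num [h4, hS1, hS0]
      · norm_num [h6, hS2, hS1]
    | succ k ih =>
      have i1 : L (2 * k + 4) = 3 * SL (k + 1) - 2 * SL k := ih.1
      have i2 : L (2 * k + 6) = 3 * SL (k + 2) - 2 * SL (k + 1) := ih.2
      have e1 : L (2 * k + 8) = L (2 * k + 7) + L (2 * k + 6) := by
        have h := hL (2 * k + 6)
        rwa [show 2 * k + 6 + 2 = 2 * k + 8 from by ring,
          show 2 * k + 6 + 1 = 2 * k + 7 from by ring] at h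
      have e2 : L (2 * k + 7) = L (2 * k + 6) + L (2 * k + 5) := by
        have h := hL (2 * k + 5)
        rwa [show 2 * k + 5 + 2 = 2 * k + 7 from by ring,
          show 2 * k + 5 + 1 = 2 * k + 6 from by ring] at h
      have e3 : L (2 * k + 6) = L (2 * k + 5) + L (2 * k + 4) := by
        have h := hL (2 * k + 4)
        rwa [show 2 * k + 4 + 2 = 2 * k + 6 from by ring,
          show 2 * k + 4 + 1 = 2 * k + 5 from by ring] at h
      have r1 : SL (k + 2) = 3 * SL (k + 1) - SL k := by
        have h := SL_rec k
        rwa [show k + 1 + 1 = k + 2 from rfl] at h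
      have r2 : SL (k + 3) = 3 * SL (k + 2) - SL (k + 1) := by
        have h := SL_rec (k + 1)
        rwa [show k + 1 + 2 = k + 3 from rfl, show k + 1 + 1 = k + 2 from rfl] at h
      constructor
      · rwa [show 2 * (k + 1) + 4 = 2 * k + 6 from by ring,
          show k + 1 + 1 = k + 2 from rfl]
      · rw [show 2 * (k + 1) + 6 = 2 * k + 8 from by ring,
          show k + 1 + 2 = k + 3 from rfl, show k + 1 + 1 = k + 2 from rfl]
        linarith
  exact fun m => (main m).1

theorem lucas_binomial_even (L : ℕ → ℤ)
    (hL0 : L 0 = 2) (hL1 : L 1 = 1)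
    (hL : ∀ n : ℕ, L (n + 2) = L (n + 1) + L n)
    (n : ℕ) (hn : 2 ≤ n) :
    L (2 * n + 2) = (∑ j ∈ Finset.range (n / 2 + 1),
        ((n - j).choose j : ℤ) * (-1 : ℤ) ^ j * 3 ^ (n + 1 - 2 * j)) -
      2 * ∑ j ∈ Finset.range ((n - 1) / 2 + 1),
        ((n - j - 1).choose j : ℤ) * (-1 : ℤ) ^ j * 3 ^ (n - 1 - 2 * j) := by
  obtain ⟨m, rfl⟩ := Nat.exists_eq_add_of_le hn
  have sum1 : ∑ j ∈ Finset.range ((2 + m) / 2 + 1),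
      ((2 + m - j).choose j : ℤ) * (-1 : ℤ) ^ j * 3 ^ (2 + m + 1 - 2 * j)
        = 3 * SL (2 + m) := by
    rw [SL_eq, Finset.mul_sum]
    refine Finset.sum_congr rfl ?_
    intro j hj
    simp only [mem_range] at hj
    have hj2 : 2 * j ≤ 2 + m := by omega
    simp only [fL]
    rw [show 2 + m + 1 - 2 * j = (2 + m - 2 * j) + 1 from by omega]
    ring
  have sum2 : ∑ j ∈ Finset.range ((2 + m - 1) / 2 + 1),
      ((2 + m - j - 1).choose j : ℤ) * (-1 : ℤ) ^ j * 3 ^ (2 + m - 1 - 2 * j)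
        = SL (1 + m) := by
    rw [SL_eq, show (1 + m) / 2 = (2 + m - 1) / 2 from by omega]
    refine Finset.sum_congr rfl ?_
    intro j hj
    simp only [fL]
    rw [show 2 + m - j - 1 = 1 + m - j from by omega,
      show 2 + m - 1 - 2 * j = 1 + m - 2 * j from by omega]
  have hk := key L hL0 hL1 hL (m + 1)
  rw [show 2 * (m + 1) + 4 = 2 * (2 + m) + 2 from by ring,
    show m + 1 + 1 = 2 + m from by omega, show m + 1 = 1 + m from by omega] at hk
  rw [sum1, sum2]
  linarith
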